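/- Let $f:(0,\infty)\to(0,\infty)$ be non-increasing with $\lim_{x\to\infty} x^2 f(x) = \infty$. Then there exist sequences $\varepsilon_n \downarrow 0$ and $x_k \uparrow \infty$ such that: (i) $\varepsilon_k x_k \sqrt{f(x_k)} \to \infty$; (ii) $\limsup_{k\to\infty} f(x_k - \varepsilon_k x_k)/f(x_k) = 1$; (iii) $\lim_{n\to\infty} \liminf_{k\to\infty} f(x_k + \varepsilon_n x_k)/f(x_k) = 1$. -/

import Mathlib

open Filter Set MeasureTheory intervalIntegral

lemma tele (G : ℝ → ℝ) (hG : Monotone G) (a T T' : ℝ) (ha : 0 < a) (hTT : T ≤ T') :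
    ∫ t in T..T', (G (t+a) - G (t-a)) ≤ 2*a*(G (T'+a) - G (T-a)) := by
  have hmono : ∀ d : ℝ, Monotone (fun t => G (t + d)) := by
    intro d x y hxy
    exact hG (by linarith)
  have hii : ∀ (u v d : ℝ), IntervalIntegrable (fun t => G (t + d)) volume u v :=
    fun u v d => (hmono d).intervalIntegrable
  have hiiG : ∀ (u v : ℝ), IntervalIntegrable G volume u v := fun u v => hG.intervalIntegrable
  have e1 : (∫ t in T..T', G (t + a)) = ∫ t in (T+a)..(T'+a), G t :=
    integral_comp_add_right G a
  have e2 : (∫ t in T..T', G (t - a)) = ∫ t in (T-a)..(T'-a), G t :=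
    integral_comp_sub_right G a
  have esub : (∫ t in T..T', (G (t+a) - G (t-a)))
      = (∫ t in (T+a)..(T'+a), G t) - (∫ t in (T-a)..(T'-a), G t) := by
    rw [← e1, ← e2]
    exact integral_sub (hii T T' a) (by simpa [sub_eq_add_neg] using hii T T' (-a))
  have A : (∫ t in (T+a)..(T'-a), G t) + (∫ t in (T'-a)..(T'+a), G t)
      = ∫ t in (T+a)..(T'+a), G t :=
    integral_add_adjacent_intervals (hiiG _ _) (hiiG _ _)
  have B : (∫ t in (T-a)..(T+a), G t) + (∫ t in (T+a)..(T'-a), G t)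
      = ∫ t in (T-a)..(T'-a), G t :=
    integral_add_adjacent_intervals (hiiG _ _) (hiiG _ _)
  have up : (∫ t in (T'-a)..(T'+a), G t) ≤ 2*a*(G (T'+a)) := by
    have := integral_mono_on (by linarith : T' - a ≤ T' + a) (hiiG _ _)
      (intervalIntegrable_const) (fun x hx => hG hx.2)
    refine this.trans_eq ?_
    rw [intervalIntegral.integral_const, smul_eq_mul]; ring
  have lo : 2*a*(G (T-a)) ≤ ∫ t in (T-a)..(T+a), G t := by
    have := integral_mono_on (by linarith : T - a ≤ T + a)
      (intervalIntegrable_const) (hiiG _ _) (fun x hx => hG hx.1)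
    calc 2*a*(G (T-a)) = ∫ _ in (T-a)..(T+a), G (T-a) := by
          rw [intervalIntegral.integral_const, smul_eq_mul]; ring
    _ ≤ _ := this
  rw [esub]
  linarith

noncomputable def aa (m : ℕ) : ℝ := (8:ℝ)⁻¹ ^ (m+1)
noncomputable def cc (m : ℕ) : ℝ := (4:ℝ)⁻¹ ^ m

lemma aa_pos (m : ℕ) : 0 < aa m := by unfold aa; positivity
lemma cc_pos (m : ℕ) : 0 < cc m := by unfold cc; positivity
lemma aa_le_one (m : ℕ) : aa m ≤ 1 := by
  unfold aa
  calc ((8:ℝ)⁻¹) ^ (m+1) ≤ 1 ^ (m+1) := by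
        apply pow_le_pow_left₀ (by norm_num) (by norm_num)
  _ = 1 := one_pow _

lemma ratio_eq (m : ℕ) : 2 * aa m / cc m = (1/4) * (1/2)^m := by
  unfold aa cc
  rw [pow_succ]
  rw [div_eq_iff (by positivity)]
  rw [mul_assoc, ← mul_pow]
  norm_num
  ring

lemma markov_bound (G : ℝ → ℝ) (hG : Monotone G) (T T' : ℝ) (hTT : T ≤ T') (m : ℕ) :
    ((volume.restrict (Icc T T')) {t : ℝ | cc m < G (t + aa m) - G (t - aa m)}).toReal
      ≤ (1/4) * (1/2)^m * (G (T' + 1) - G (T - 1)) := by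
  set a := aa m
  set c := cc m
  have ha := aa_pos m
  have hc := cc_pos m
  set μ := volume.restrict (Icc T T') with hμ
  set D : ℝ → ℝ := fun t => G (t + a) - G (t - a) with hD
  have hDnn : ∀ t, 0 ≤ D t := fun t => sub_nonneg.2 (hG (by linarith))
  have hint : Integrable D μ := by
    rw [hμ, ← IntegrableOn]
    rw [integrableOn_Icc_iff_integrableOn_Ioc]
    have : IntervalIntegrable D volume T T' := by
      have h1 : Monotone (fun t => G (t + a)) := fun x y hxy => hG (by linarith)
      have h2 : Monotone (fun t => G (t - a)) := fun x y hxy => hG (by linarith)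
      exact h1.intervalIntegrable.sub h2.intervalIntegrable
    rwa [intervalIntegrable_iff_integrableOn_Ioc_of_le hTT] at this
  have markov : c * (μ {t | c ≤ D t}).toReal ≤ ∫ t, D t ∂μ :=
    mul_meas_ge_le_integral_of_nonneg (Eventually.of_forall hDnn) hint c
  have hIeq : (∫ t, D t ∂μ) = ∫ t in T..T', D t := by
    rw [hμ, intervalIntegral.integral_of_le hTT, integral_Icc_eq_integral_Ioc]
  have htele : (∫ t in T..T', D t) ≤ 2*a*(G (T'+a) - G (T-a)) := tele G hG a T T' ha hTT
  have hmono2 : 2*a*(G (T'+a) - G (T-a)) ≤ 2*a*(G (T'+1) - G (T-1)) := by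
    have h1 : G (T' + a) ≤ G (T' + 1) := hG (by linarith [aa_le_one m])
    have h2 : G (T - 1) ≤ G (T - a) := hG (by linarith [aa_le_one m])
    nlinarith
  have hfin : μ {t | c ≤ D t} ≠ ⊤ := by
    refine (lt_of_le_of_lt (measure_mono (subset_univ _)) ?_).ne
    rw [hμ, Measure.restrict_apply_univ]
    exact measure_Icc_lt_top
  have hfin2 : μ {t | c < D t} ≠ ⊤ := by
    refine (lt_of_le_of_lt (measure_mono (subset_univ _)) ?_).ne
    rw [hμ, Measure.restrict_apply_univ]
    exact measure_Icc_lt_top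
  have hsub : (μ {t | c < D t}).toReal ≤ (μ {t | c ≤ D t}).toReal := by
    apply ENNReal.toReal_mono hfin
    exact measure_mono (setOf_subset_setOf.2 (fun t => le_of_lt))
  have key : c * (μ {t | c < D t}).toReal ≤ 2*a*(G (T'+1) - G (T-1)) := by
    have := mul_le_mul_of_nonneg_left hsub hc.le
    linarith [markov, hIeq ▸ markov]
  rw [← ratio_eq m]
  rw [div_mul_eq_mul_div, le_div_iff₀ hc, mul_comm _ c]
  calc c * (μ {t | c < D t}).toReal ≤ 2*a*(G (T'+1) - G (T-1)) := key
  _ = 2 * a * (G (T' + 1) - G (T - 1)) := rfl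

lemma good_exists (G : ℝ → ℝ) (hG : Monotone G)
    (hlim2 : Tendsto (fun t => 2*t - G t) atTop atTop) (M : ℕ) (T : ℝ) :
    ∃ t, T ≤ t ∧ ∀ m ≤ M, G (t + aa m) - G (t - aa m) ≤ cc m := by
  -- choose T'
  obtain ⟨T₁, hT₁⟩ := (tendsto_atTop.1 hlim2 (2*T + 3 - G (T-1))).exists_forall_of_atTop
  set T' := max (T+1) T₁ with hT'def
  have hTT1 : T + 1 ≤ T' := le_max_left _ _
  have hTT : T ≤ T' := by linarith
  have hΔlt : G (T'+1) - G (T-1) < 2*(T'-T) := by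
    have h := hT₁ (T'+1) (by
      have : T₁ ≤ T' := le_max_right _ _
      linarith)
    linarith
  set Δ := G (T'+1) - G (T-1) with hΔdef
  have hΔnn : 0 ≤ Δ := sub_nonneg.2 (hG (by linarith))
  by_contra hcon
  push_neg at hcon
  -- every point of Icc T T' is bad at some scale
  have hbad : ∀ t ∈ Icc T T', ∃ m ≤ M, cc m < G (t + aa m) - G (t - aa m) := by
    intro t ht
    obtain ⟨m, hm, hmm⟩ := hcon t ht.1
    exact ⟨m, hm, hmm⟩
  set μ := volume.restrict (Icc T T') with hμ
  set B : ℕ → Set ℝ := fun m => {t : ℝ | cc m < G (t + aa m) - G (t - aa m)} with hB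
  have hcover : Icc T T' ⊆ ⋃ m ∈ Finset.range (M+1), B m := by
    intro t ht
    obtain ⟨m, hm, hmm⟩ := hbad t ht
    exact Set.mem_biUnion (Finset.mem_range.2 (Nat.lt_succ_of_le hm)) hmm
  have hfinB : ∀ m, μ (B m) ≠ ⊤ := by
    intro m
    refine (lt_of_le_of_lt (measure_mono (subset_univ _)) ?_).ne
    rw [hμ, Measure.restrict_apply_univ]
    exact measure_Icc_lt_top
  have hμIcc : μ (Icc T T') = ENNReal.ofReal (T' - T) := by
    rw [hμ, Measure.restrict_apply_self, Real.volume_Icc]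
  have hle : μ (Icc T T') ≤ ∑ m ∈ Finset.range (M+1), μ (B m) := by
    calc μ (Icc T T') ≤ μ (⋃ m ∈ Finset.range (M+1), B m) := measure_mono hcover
    _ ≤ ∑ m ∈ Finset.range (M+1), μ (B m) := measure_biUnion_finset_le _ _
  have hsumfin : (∑ m ∈ Finset.range (M+1), μ (B m)) ≠ ⊤ :=
    (ENNReal.sum_lt_top.2 (fun m _ => (hfinB m).lt_top)).ne
  have hreal : T' - T ≤ ∑ m ∈ Finset.range (M+1), (μ (B m)).toReal := by
    have h1 : (μ (Icc T T')).toReal ≤ (∑ m ∈ Finset.range (M+1), μ (B m)).toReal :=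
      ENNReal.toReal_mono hsumfin hle
    rw [hμIcc, ENNReal.toReal_ofReal (by linarith)] at h1
    rwa [ENNReal.toReal_sum (fun m _ => hfinB m)] at h1
  have hbnd : ∀ m ∈ Finset.range (M+1), (μ (B m)).toReal ≤ (1/4) * (1/2)^m * Δ := by
    intro m _
    exact markov_bound G hG T T' hTT m
  have hsum : (∑ m ∈ Finset.range (M+1), (μ (B m)).toReal)
      ≤ ∑ m ∈ Finset.range (M+1), (1/4) * (1/2:ℝ)^m * Δ :=
    Finset.sum_le_sum hbnd
  have hgeom : (∑ m ∈ Finset.range (M+1), (1/4) * (1/2:ℝ)^m * Δ) ≤ Δ / 2 := by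
    rw [← Finset.sum_mul, ← Finset.mul_sum]
    have : (∑ m ∈ Finset.range (M+1), (1/2:ℝ)^m) ≤ 2 := by
      rw [geom_sum_eq (by norm_num : (1/2:ℝ) ≠ 1)]
      have hp : (0:ℝ) ≤ (1/2:ℝ)^(M+1) := by positivity
      rw [div_le_iff_of_neg (by norm_num : (1/2:ℝ) - 1 < 0)]
      linarith
    nlinarith
  linarith

lemma aa_anti : Antitone aa := by
  intro k l hkl
  unfold aa
  exact pow_le_pow_of_le_one (by norm_num) (by norm_num) (by omega)

lemma aa_tendsto : Tendsto aa atTop (nhds 0) := by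
  have h := tendsto_pow_atTop_nhds_zero_of_lt_one
    (by norm_num : (0:ℝ) ≤ (8:ℝ)⁻¹) (by norm_num : (8:ℝ)⁻¹ < 1)
  exact h.comp (tendsto_add_atTop_nat 1)

lemma cc_tendsto : Tendsto cc atTop (nhds 0) := by
  exact tendsto_pow_atTop_nhds_zero_of_lt_one
    (by norm_num : (0:ℝ) ≤ (4:ℝ)⁻¹) (by norm_num : (4:ℝ)⁻¹ < 1)

lemma log_ineq (u v c : ℝ) (hu : 0 < u) (hv : 0 < v)
    (h : Real.log u - Real.log v ≤ c) : u ≤ Real.exp c * v := by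
  have h2 : Real.log u ≤ c + Real.log v := by linarith
  calc u = Real.exp (Real.log u) := (Real.exp_log hu).symm
  _ ≤ Real.exp (c + Real.log v) := Real.exp_le_exp.2 h2
  _ = Real.exp c * v := by rw [Real.exp_add, Real.exp_log hv]

lemma sqrt_atTop : Tendsto Real.sqrt atTop atTop := by
  apply tendsto_atTop_atTop.2
  intro b
  refine ⟨(max b 0)^2, fun x hx => le_trans (le_max_left b 0) ?_⟩
  rw [← Real.sqrt_sq (le_max_right b 0)]
  exact Real.sqrt_le_sqrt hx

/-- Let `f : (0,∞) → (0,∞)` be non-increasing with `x² f(x) → ∞`. Then there exist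
sequences `εₙ ↓ 0` and `x_k ↑ ∞` such that (i) `ε_k x_k √(f(x_k)) → ∞`,
(ii) `limsup_k f(x_k - ε_k x_k)/f(x_k) = 1`, and
(iii) `limₙ liminf_k f(x_k + εₙ x_k)/f(x_k) = 1`. -/
theorem exists_good_sequences
    (f : ℝ → ℝ)
    (hpos : ∀ x ∈ Set.Ioi (0:ℝ), 0 < f x)
    (hanti : ∀ x y : ℝ, 0 < x → x ≤ y → f y ≤ f x)
    (hlim : Tendsto (fun x => x ^ 2 * f x) atTop atTop) :
    ∃ ε : ℕ → ℝ, ∃ X : ℕ → ℝ,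
      (∀ n, 0 < ε n) ∧ Antitone ε ∧ Tendsto ε atTop (nhds 0) ∧
      (∀ k, 0 < X k) ∧ Monotone X ∧ Tendsto X atTop atTop ∧
      Tendsto (fun k => ε k * X k * Real.sqrt (f (X k))) atTop atTop ∧
      Filter.limsup (fun k => f (X k - ε k * X k) / f (X k)) atTop = 1 ∧
      Tendsto (fun n => Filter.liminf (fun k => f (X k + ε n * X k) / f (X k)) atTop)
        atTop (nhds 1) := by
  have hfe : ∀ s : ℝ, 0 < f (Real.exp s) := fun s => hpos _ (Real.exp_pos s)
  set G : ℝ → ℝ := fun t => -Real.log (f (Real.exp t)) with hGdef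
  have hG : Monotone G := by
    intro s t hst
    have : f (Real.exp t) ≤ f (Real.exp s) :=
      hanti _ _ (Real.exp_pos s) (Real.exp_le_exp.2 hst)
    simp only [hGdef, neg_le_neg_iff]
    exact Real.log_le_log (hfe t) this
  have hlim2 : Tendsto (fun t => 2*t - G t) atTop atTop := by
    have h1 : Tendsto (fun t => (Real.exp t)^2 * f (Real.exp t)) atTop atTop :=
      hlim.comp Real.tendsto_exp_atTop
    have h2 := Real.tendsto_log_atTop.comp h1
    refine h2.congr (fun t => ?_)
    show Real.log ((Real.exp t)^2 * f (Real.exp t)) = 2*t - G t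
    rw [Real.log_mul (by positivity) (hfe t).ne', Real.log_pow, Real.log_exp]
    simp only [hGdef, sub_neg_eq_add, Nat.cast_ofNat]
  -- epsilon
  set ε : ℕ → ℝ := fun k => 1 - Real.exp (-(aa k)) with hεdef
  have hεpos : ∀ k, 0 < ε k := by
    intro k
    have : Real.exp (-(aa k)) < 1 := Real.exp_lt_one_iff.2 (by linarith [aa_pos k])
    simp only [hεdef]; linarith
  have hεlt1 : ∀ k, ε k < 1 := by
    intro k
    have := Real.exp_pos (-(aa k))
    simp only [hεdef]; linarith
  have hεanti : Antitone ε := by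
    intro k l hkl
    have := aa_anti hkl
    simp only [hεdef, sub_le_sub_iff_left]
    exact Real.exp_le_exp.2 (by linarith)
  have hεlim : Tendsto ε atTop (nhds 0) := by
    have h1 : Tendsto (fun k => Real.exp (-(aa k))) atTop (nhds 1) := by
      have h0 : Tendsto (fun k => -(aa k)) atTop (nhds 0) := by simpa using aa_tendsto.neg
      have := (Real.continuous_exp.tendsto 0).comp h0
      simpa [Function.comp_def] using this
    have := (tendsto_const_nhds (x := (1:ℝ)) (f := atTop)).sub h1
    simpa using this
  -- x sqrt f x tendsto
  have hq : Tendsto (fun x => x * Real.sqrt (f x)) atTop atTop := by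
    have h1 : Tendsto (fun x => Real.sqrt (x^2 * f x)) atTop atTop :=
      sqrt_atTop.comp hlim
    apply h1.congr'
    filter_upwards [eventually_gt_atTop (0:ℝ)] with x hx
    rw [Real.sqrt_mul (sq_nonneg x), Real.sqrt_sq hx.le]
  have hS : ∀ k : ℕ, ∃ S, ∀ x ≥ S, ((k:ℝ)+1)/(ε k) ≤ x * Real.sqrt (f x) :=
    fun k => (tendsto_atTop.1 hq _).exists_forall_of_atTop
  choose S hSspec using hS
  set B : ℕ → ℝ := fun k => max (k:ℝ) (Real.log (max (S k) 1)) with hBdef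
  choose g hg1 hg2 using fun (M : ℕ) (T : ℝ) => good_exists G hG hlim2 M T
  set t : ℕ → ℝ := fun k =>
    Nat.rec (g 0 (B 0)) (fun k tk => g (k+1) (max (tk + 1) (B (k+1)))) k with htdef
  have ht0 : t 0 = g 0 (B 0) := rfl
  have htS : ∀ k, t (k+1) = g (k+1) (max (t k + 1) (B (k+1))) := fun k => rfl
  have htB : ∀ k, B k ≤ t k := by
    intro k
    cases k with
    | zero => exact hg1 0 (B 0)
    | succ k => exact le_trans (le_max_right _ _) (hg1 (k+1) _)
  have htmono : Monotone t := by
    apply monotone_nat_of_le_succ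
    intro k
    have := hg1 (k+1) (max (t k + 1) (B (k+1)))
    rw [← htS k] at this
    have h2 : t k + 1 ≤ max (t k + 1) (B (k+1)) := le_max_left _ _
    linarith [le_trans h2 this]
  have hgood : ∀ k, ∀ m ≤ k, G (t k + aa m) - G (t k - aa m) ≤ cc m := by
    intro k
    cases k with
    | zero => exact hg2 0 (B 0)
    | succ k => exact hg2 (k+1) _
  -- key f inequality
  have hkey : ∀ k m, m ≤ k →
      f (Real.exp (t k - aa m)) ≤ Real.exp (cc m) * f (Real.exp (t k + aa m)) := by
    intro k m hm
    apply log_ineq _ _ _ (hfe _) (hfe _)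
    have := hgood k m hm
    simp only [hGdef] at this
    linarith
  set X : ℕ → ℝ := fun k => Real.exp (t k) with hXdef
  have hXpos : ∀ k, 0 < X k := fun k => Real.exp_pos _
  have hXmono : Monotone X := fun a b hab => Real.exp_le_exp.2 (htmono hab)
  have htk : ∀ k : ℕ, (k:ℝ) ≤ t k := fun k => le_trans (le_max_left _ _) (htB k)
  have hXtop : Tendsto X atTop atTop := by
    apply Real.tendsto_exp_atTop.comp
    exact tendsto_atTop_mono htk tendsto_natCast_atTop_atTop
  have hXS : ∀ k, S k ≤ X k := by
    intro k
    have h1 : Real.log (max (S k) 1) ≤ t k := le_trans (le_max_right _ _) (htB k)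
    calc S k ≤ max (S k) 1 := le_max_left _ _
    _ = Real.exp (Real.log (max (S k) 1)) :=
        (Real.exp_log (lt_of_lt_of_le one_pos (le_max_right _ _))).symm
    _ ≤ X k := Real.exp_le_exp.2 h1
  refine ⟨ε, X, hεpos, hεanti, hεlim, hXpos, hXmono, hXtop, ?_, ?_, ?_⟩
  · -- (i)
    apply tendsto_atTop_mono _ tendsto_natCast_atTop_atTop
    intro k
    have h1 : ((k:ℝ)+1)/(ε k) ≤ X k * Real.sqrt (f (X k)) := hSspec k (X k) (hXS k)
    have h2 := (hεpos k)
    calc (k:ℝ) ≤ (k:ℝ) + 1 := by linarith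
    _ = ε k * (((k:ℝ)+1)/(ε k)) := by field_simp
    _ ≤ ε k * (X k * Real.sqrt (f (X k))) := by
        apply mul_le_mul_of_nonneg_left h1 h2.le
    _ = ε k * X k * Real.sqrt (f (X k)) := by ring
  · -- (ii)
    have harg : ∀ k, X k - ε k * X k = Real.exp (t k - aa k) := by
      intro k
      have : X k - ε k * X k = X k * (1 - ε k) := by ring
      rw [this]
      simp only [hεdef, sub_sub_cancel, hXdef]
      rw [← Real.exp_add]
      ring_nf
    have hub : ∀ k, f (X k - ε k * X k) / f (X k) ≤ Real.exp (cc k) := by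
      intro k
      rw [harg k, div_le_iff₀ (hfe _)]
      calc f (Real.exp (t k - aa k)) ≤ Real.exp (cc k) * f (Real.exp (t k + aa k)) :=
            hkey k k le_rfl
      _ ≤ Real.exp (cc k) * f (X k) := by
          apply mul_le_mul_of_nonneg_left _ (Real.exp_pos _).le
          exact hanti _ _ (Real.exp_pos _) (Real.exp_le_exp.2 (by linarith [aa_pos k]))
    have hlb : ∀ k, 1 ≤ f (X k - ε k * X k) / f (X k) := by
      intro k
      rw [harg k, le_div_iff₀ (hfe _), one_mul]
      exact hanti _ _ (Real.exp_pos _) (Real.exp_le_exp.2 (by linarith [aa_pos k]))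
    have htend : Tendsto (fun k => f (X k - ε k * X k) / f (X k)) atTop (nhds 1) := by
      have hcl : Tendsto (fun k => Real.exp (cc k)) atTop (nhds 1) := by
        have := (Real.continuous_exp.tendsto 0).comp cc_tendsto
        simpa [Function.comp_def] using this
      exact tendsto_of_tendsto_of_tendsto_of_le_of_le tendsto_const_nhds hcl hlb hub
    exact htend.limsup_eq
  · -- (iii)
    have hargle : ∀ n k, X k ≤ X k + ε n * X k := by
      intro n k
      nlinarith [hεpos n, hXpos k]
    have hargub : ∀ n k, X k + ε n * X k ≤ Real.exp (t k + aa n) := by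
      intro n k
      have h2 : X k + ε n * X k = X k * (2 - Real.exp (-(aa n))) := by
        simp only [hεdef]; ring
      rw [h2]
      have e1 := Real.add_one_le_exp (aa n)
      have e2 := Real.add_one_le_exp (-(aa n))
      have h3 : 2 - Real.exp (-(aa n)) ≤ Real.exp (aa n) := by linarith
      calc X k * (2 - Real.exp (-(aa n))) ≤ X k * Real.exp (aa n) := by
            apply mul_le_mul_of_nonneg_left h3 (hXpos k).le
      _ = Real.exp (t k + aa n) := by rw [Real.exp_add]
    have hub : ∀ n k, f (X k + ε n * X k) / f (X k) ≤ 1 := by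
      intro n k
      rw [div_le_one (hfe _)]
      exact hanti _ _ (hXpos k) (hargle n k)
    have hlb : ∀ n k, n ≤ k → Real.exp (-(cc n)) ≤ f (X k + ε n * X k) / f (X k) := by
      intro n k hnk
      rw [le_div_iff₀ (hfe _)]
      have h1 : f (Real.exp (t k + aa n)) ≤ f (X k + ε n * X k) := by
        apply hanti _ _ _ (hargub n k)
        have := hXpos k
        nlinarith [hεpos n]
      have h2 : Real.exp (-(cc n)) * f (X k) ≤ f (Real.exp (t k + aa n)) := by
        have h3 := hkey k n hnk
        have h4 : f (X k) ≤ f (Real.exp (t k - aa n)) :=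
          hanti _ _ (Real.exp_pos _) (Real.exp_le_exp.2 (by linarith [aa_pos n]))
        have h5 : Real.exp (-(cc n)) * f (Real.exp (t k - aa n)) ≤ f (Real.exp (t k + aa n)) := by
          rw [Real.exp_neg]
          rw [inv_mul_le_iff₀ (Real.exp_pos _)]
          exact h3
        calc Real.exp (-(cc n)) * f (X k) ≤ Real.exp (-(cc n)) * f (Real.exp (t k - aa n)) :=
              mul_le_mul_of_nonneg_left h4 (Real.exp_pos _).le
        _ ≤ _ := h5
      linarith
    set L : ℕ → ℝ := fun n => Filter.liminf (fun k => f (X k + ε n * X k) / f (X k)) atTop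
      with hLdef
    have hLub : ∀ n, L n ≤ 1 := by
      intro n
      apply Filter.liminf_le_of_frequently_le
      · exact Frequently.of_forall (fun k => hub n k)
      · exact isBoundedUnder_of_eventually_ge
          (eventually_atTop.2 ⟨n, fun k hk => hlb n k hk⟩)
    have hLlb : ∀ n, Real.exp (-(cc n)) ≤ L n := by
      intro n
      apply Filter.le_liminf_of_le
      · exact (isBoundedUnder_of_eventually_le
          (Eventually.of_forall (fun k => hub n k))).isCoboundedUnder_ge
      · exact eventually_atTop.2 ⟨n, fun k hk => hlb n k hk⟩
    have hcl : Tendsto (fun n => Real.exp (-(cc n))) atTop (nhds 1) := by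
      have h0 : Tendsto (fun k => -(cc k)) atTop (nhds 0) := by simpa using cc_tendsto.neg
      have := (Real.continuous_exp.tendsto 0).comp h0
      simpa [Function.comp_def] using this
    exact tendsto_of_tendsto_of_tendsto_of_le_of_le hcl tendsto_const_nhds hLlb hLub
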